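/- Let G be a Lie group and ⟨·,·⟩: 𝔤 ⊗ 𝔤 → 𝔱 an Ad-invariant symmetric bilinear map. Define ν := −⟨pr₁*θ^L ∧ pr₂*θ^R⟩ ∈ Ω²(G×G,𝔱). Then ν satisfies the simplicial cocycle identity on G³: pr₂₃*ν − (m×id)*ν + (id×m)*ν − pr₁₂*ν = 0, where m is group multiplication. -/
import Mathlib


/-!
STATEMENT 2: Let G be a Lie group and ⟨·,·⟩: 𝔤 ⊗ 𝔤 → 𝔱 an Ad-invariant symmetric bilinear
map.  Define ν := −⟨pr₁*θ^L ∧ pr₂*θ^R⟩ ∈ Ω²(G×G,𝔱).  Then ν satisfies the simplicial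
cocycle identity on G³: pr₂₃*ν − (m×id)*ν + (id×m)*ν − pr₁₂*ν = 0.

We work with the linear Lie group G = Mˣ of units of a complete normed ℝ-algebra M; tangent
vectors at a point of G³ ⊆ M×M×M are triples, and the pushforward of (x₁,x₂,x₃) under
m×id (resp. id×m) is (x₁·g₂ + g₁·x₂, x₃) (resp. (x₁, x₂·g₃ + g₂·x₃)).
-/

noncomputable section

/-- The left Maurer–Cartan form θ^L: at `x` it sends `v ↦ x⁻¹ * v`. -/
def thetaL (M : Type*) [NormedRing M] [NormedAlgebra ℝ M] (x : M) : M →L[ℝ] M :=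
  ContinuousLinearMap.mul ℝ M (Ring.inverse x)

/-- The right Maurer–Cartan form θ^R: at `x` it sends `v ↦ v * x⁻¹`. -/
def thetaR (M : Type*) [NormedRing M] [NormedAlgebra ℝ M] (x : M) : M →L[ℝ] M :=
  (ContinuousLinearMap.mul ℝ M).flip (Ring.inverse x)

/-- ν = −⟨pr₁*θ^L ∧ pr₂*θ^R⟩ at `p = (g₁,g₂)` on tangent vectors `u v` of G×G. -/
def nu2 {M t : Type*} [NormedRing M] [NormedAlgebra ℝ M]
    [NormedAddCommGroup t] [NormedSpace ℝ t]
    (B : M →L[ℝ] M →L[ℝ] t) (p : M × M) (u v : M × M) : t :=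
  -(B (thetaL M p.1 u.1) (thetaR M p.2 v.2) - B (thetaL M p.1 v.1) (thetaR M p.2 u.2))

theorem stmt2 {M t : Type*} [NormedRing M] [NormedAlgebra ℝ M] [CompleteSpace M]
    [NormedAddCommGroup t] [NormedSpace ℝ t]
    (B : M →L[ℝ] M →L[ℝ] t)
    (hsymm : ∀ u v : M, B u v = B v u)
    (hinv : ∀ (g : Mˣ) (u v : M), B (↑g * u * ↑g⁻¹) (↑g * v * ↑g⁻¹) = B u v) :
    ∀ (g₁ g₂ g₃ : Mˣ) (u v : M × M × M),
      -- pr₂₃*ν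
      nu2 B ((↑g₂ : M), (↑g₃ : M)) (u.2.1, u.2.2) (v.2.1, v.2.2)
      -- − (m×id)*ν
      - nu2 B ((↑g₁ : M) * ↑g₂, (↑g₃ : M))
          (u.1 * ↑g₂ + ↑g₁ * u.2.1, u.2.2) (v.1 * ↑g₂ + ↑g₁ * v.2.1, v.2.2)
      -- + (id×m)*ν
      + nu2 B ((↑g₁ : M), (↑g₂ : M) * ↑g₃)
          (u.1, u.2.1 * ↑g₃ + ↑g₂ * u.2.2) (v.1, v.2.1 * ↑g₃ + ↑g₂ * v.2.2)
      -- − pr₁₂*ν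
      - nu2 B ((↑g₁ : M), (↑g₂ : M)) (u.1, u.2.1) (v.1, v.2.1) = 0 := by
  intro g₁ g₂ g₃ u v
  obtain ⟨x₁, x₂, x₃⟩ := u
  obtain ⟨y₁, y₂, y₃⟩ := v
  have hi12 : Ring.inverse ((↑g₁ : M) * ↑g₂) = ↑g₂⁻¹ * ↑g₁⁻¹ := by
    rw [← Units.val_mul, Ring.inverse_unit, mul_inv_rev, Units.val_mul]
  have hi23 : Ring.inverse ((↑g₂ : M) * ↑g₃) = ↑g₃⁻¹ * ↑g₂⁻¹ := by
    rw [← Units.val_mul, Ring.inverse_unit, mul_inv_rev, Units.val_mul]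
  have h1 : ∀ x y : M, B (↑g₂⁻¹ * ↑g₁⁻¹ * (x * ↑g₂)) (y * ↑g₃⁻¹)
      = B (↑g₁⁻¹ * x) (↑g₂ * (y * ↑g₃⁻¹) * ↑g₂⁻¹) := by
    intro x y
    have h := hinv g₂ (↑g₂⁻¹ * ↑g₁⁻¹ * (x * ↑g₂)) (y * ↑g₃⁻¹)
    calc B (↑g₂⁻¹ * ↑g₁⁻¹ * (x * ↑g₂)) (y * ↑g₃⁻¹)
        = B (↑g₂ * (↑g₂⁻¹ * ↑g₁⁻¹ * (x * ↑g₂)) * ↑g₂⁻¹) (↑g₂ * (y * ↑g₃⁻¹) * ↑g₂⁻¹) := h.symm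
      _ = B (↑g₁⁻¹ * x) (↑g₂ * (y * ↑g₃⁻¹) * ↑g₂⁻¹) := by
          congr 2
          simp [mul_assoc]
  simp only [nu2, thetaL, thetaR, ContinuousLinearMap.mul_apply', ContinuousLinearMap.flip_apply,
    Ring.inverse_unit, hi12, hi23, mul_add, add_mul, map_add, ContinuousLinearMap.add_apply]
  have e1 : ∀ x : M, (↑g₂⁻¹ : M) * ↑g₁⁻¹ * (↑g₁ * x) = ↑g₂⁻¹ * x := by
    intro x; simp [mul_assoc]
  have e2 : ∀ y : M, (y * ↑g₃) * (↑g₃⁻¹ * ↑g₂⁻¹) = y * ↑g₂⁻¹ := by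
    intro y; simp [mul_assoc]
  have e3 : ∀ y : M, (↑g₂ : M) * y * (↑g₃⁻¹ * ↑g₂⁻¹) = ↑g₂ * (y * ↑g₃⁻¹) * ↑g₂⁻¹ := by
    intro y; simp [mul_assoc]
  rw [e1 x₂, e1 y₂, e2 x₂, e2 y₂, e3 x₃, e3 y₃, ← h1 x₁ y₃, ← h1 y₁ x₃]
  abel

end
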